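/- arXiv:2603.03776 — 7 statements merged into one kernel-verified Lean document; each statement's English description precedes it below -/
import Mathlib

section
/- Over a commutative ring of characteristic 2, the determinant of a symmetric matrix with zero diagonal equals the sum, over all fixed-point-free involutions σ of the index set, of the product of entries b_{i,σ(i)}: the contributions of all permutations containing a cycle of length greater than 2 cancel in pairs. -/
open Finset

/-- Over a commutative ring of characteristic 2, the determinant of a symmetric matrix with
zero diagonal equals the sum over all fixed-point-free involutions `σ` of the products
`∏ i, B i (σ i)`: contributions of permutations containing a cycle of length `> 2` cancel. -/
theorem stmt2 {R : Type*} [CommRing R] (hchar : (2 : R) = 0) (m : ℕ)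
    (B : Matrix (Fin m) (Fin m) R) (hsym : B.IsSymm) (hdiag : ∀ i, B i i = 0) :
    B.det = ∑ σ ∈ Finset.univ.filter
        (fun σ : Equiv.Perm (Fin m) => σ * σ = 1 ∧ ∀ i, σ i ≠ i),
      ∏ i, B i (σ i) := by
  classical
  have hneg : ∀ x : R, -x = x := by
    intro x; linear_combination (-x) * hchar
  have hprod : ∀ σ : Equiv.Perm (Fin m), (∏ i, B (σ i) i) = ∏ i, B i (σ i) := by
    intro σ
    exact Finset.prod_congr rfl fun i _ => hsym.apply i (σ i)
  have hinv : ∀ σ : Equiv.Perm (Fin m), (∏ i, B i (σ⁻¹ i)) = ∏ i, B i (σ i) := by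
    intro σ
    rw [← Equiv.prod_comp σ (fun i => B i (σ⁻¹ i))]
    simp only [Equiv.Perm.coe_inv, Equiv.symm_apply_apply]
    exact hprod σ
  rw [Matrix.det_apply]
  have h1 : ∀ σ : Equiv.Perm (Fin m),
      Equiv.Perm.sign σ • (∏ i, B (σ i) i) = ∏ i, B i (σ i) := by
    intro σ
    rcases Int.units_eq_one_or (Equiv.Perm.sign σ) with h | h <;>
      rw [h] <;> simp [hprod σ, hneg]
  rw [Finset.sum_congr rfl fun σ _ => h1 σ]
  rw [← Finset.sum_filter_add_sum_filter_not Finset.univ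
    (fun σ : Equiv.Perm (Fin m) => σ * σ = 1 ∧ ∀ i, σ i ≠ i)]
  have h0 : ∑ σ ∈ Finset.univ.filter
      (fun σ : Equiv.Perm (Fin m) => ¬(σ * σ = 1 ∧ ∀ i, σ i ≠ i)),
      ∏ i, B i (σ i) = 0 := by
    refine Finset.sum_involution (fun σ _ => σ⁻¹) ?_ ?_ ?_ ?_
    · intro σ _
      rw [hinv σ]
      linear_combination (∏ i, B i (σ i)) * hchar
    · intro σ hσ hne heq
      simp only [Finset.mem_filter, Finset.mem_univ, true_and, not_and, not_forall,
        not_ne_iff] at hσ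
      have h2 : σ * σ = 1 := by
        have heq' : σ⁻¹ = σ := heq
        nth_rewrite 2 [← heq']
        group
      obtain ⟨i, hi⟩ := hσ h2
      exact hne (Finset.prod_eq_zero (Finset.mem_univ i) (by rw [hi]; exact hdiag i))
    · intro σ hσ
      simp only [Finset.mem_filter, Finset.mem_univ, true_and] at hσ ⊢
      intro ⟨h2, hfix⟩
      refine hσ ⟨?_, fun i h => hfix i (by nth_rewrite 1 [← h]; simp)⟩
      · have h3 : (σ⁻¹ * σ⁻¹)⁻¹ = ((1 : Equiv.Perm (Fin m)))⁻¹ := by rw [h2]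
        simpa [mul_inv_rev] using h3
    · intro σ _; exact inv_inv σ
  rw [h0, add_zero]
end

section
/- In characteristic 2, for a symmetric zero-diagonal m × m matrix B whose nonzero entries are B_{i,j} = X^{w({i,j})} for edges {i,j} of a graph G with positive integer weights w, the determinant of B (computed in 𝔽₂[X]) equals the sum over all perfect matchings M of G of X raised to twice the weight of M. -/
open Polynomial Finset
open scoped Classical

noncomputable section

/-- `M` is a perfect matching of `G` given as a set of edges: every element of `M` is an edge
of `G`, and every vertex lies on exactly one edge of `M`. -/
def IsPM {m : ℕ} (G : SimpleGraph (Fin m)) (M : Finset (Sym2 (Fin m))) : Prop :=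
  (∀ e ∈ M, e ∈ G.edgeSet) ∧ ∀ v : Fin m, ∃! e, e ∈ M ∧ v ∈ e

/-- For the symmetric zero-diagonal matrix over `𝔽₂[X]` with entries `X^{w({i,j})}` on the
edges of a weighted graph `G`, the determinant equals the sum over all perfect matchings `M`
of `G` of `X^{2·w(M)}`. -/
theorem stmt3 (m : ℕ) (G : SimpleGraph (Fin m)) (w : Sym2 (Fin m) → ℕ) :
    (Matrix.of fun i j =>
        if G.Adj i j then (X : Polynomial (ZMod 2)) ^ (w s(i, j)) else 0).det =
      ∑ M ∈ Finset.univ.filter (fun M : Finset (Sym2 (Fin m)) => IsPM G M),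
        (X : Polynomial (ZMod 2)) ^ (2 * ∑ e ∈ M, w e) := by
  classical
  set B : Matrix (Fin m) (Fin m) (Polynomial (ZMod 2)) :=
    Matrix.of fun i j =>
      if G.Adj i j then (X : Polynomial (ZMod 2)) ^ (w s(i, j)) else 0 with hBdef
  have hB : ∀ i j, B i j = if G.Adj i j then (X : Polynomial (ZMod 2)) ^ (w s(i, j)) else 0 :=
    fun i j => rfl
  have hsym : ∀ i j, B i j = B j i := by
    intro i j
    rw [hB, hB, Sym2.eq_swap]
    simp [G.adj_comm i j]
  set f : Equiv.Perm (Fin m) → Polynomial (ZMod 2) := fun σ => ∏ i, B (σ i) i with hf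
  -- step 1: det = plain sum of f over all permutations (char 2 kills signs)
  have h1 : B.det = ∑ σ : Equiv.Perm (Fin m), f σ := by
    rw [Matrix.det_apply']
    refine Finset.sum_congr rfl fun σ _ => ?_
    have : ((Equiv.Perm.sign σ : ℤ) : Polynomial (ZMod 2)) = 1 := by
      rcases Int.units_eq_one_or (Equiv.Perm.sign σ) with h | h <;> rw [h] <;>
        simp [CharTwo.neg_eq]
    rw [this, one_mul]
  -- f is invariant under inverse
  have hfinv : ∀ σ : Equiv.Perm (Fin m), f σ⁻¹ = f σ := by
    intro σ
    rw [hf]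
    calc ∏ i, B (σ⁻¹ i) i = ∏ i, B (σ⁻¹ (σ i)) (σ i) := (Equiv.prod_comp σ _).symm
    _ = ∏ i, B (σ i) i := by
        refine Finset.prod_congr rfl fun i _ => ?_
        rw [← Equiv.Perm.mul_apply, inv_mul_cancel, Equiv.Perm.one_apply]
        exact hsym i (σ i)
  have hfinv' : ∀ σ : Equiv.Perm (Fin m), f σ⁻¹ = f σ := hfinv
  -- split the sum
  have h2 : ∑ σ : Equiv.Perm (Fin m), f σ =
      ∑ σ ∈ Finset.univ.filter (fun σ : Equiv.Perm (Fin m) => σ * σ = 1), f σ := by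
    rw [← Finset.sum_filter_add_sum_filter_not Finset.univ
      (fun σ : Equiv.Perm (Fin m) => σ * σ = 1) f]
    have hzero : ∑ σ ∈ Finset.univ.filter
        (fun σ : Equiv.Perm (Fin m) => ¬ σ * σ = 1), f σ = 0 := by
      refine Finset.sum_involution (fun σ _ => σ⁻¹) ?_ ?_ ?_ ?_
      · intro σ hσ
        show f σ + f σ⁻¹ = 0
        rw [hfinv σ]
        exact CharTwo.add_self_eq_zero _
      · intro σ hσ _
        show σ⁻¹ ≠ σ
        simp only [Finset.mem_filter, Finset.mem_univ, true_and] at hσ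
        intro h
        have h2 : σ * σ = σ * σ⁻¹ := by rw [h]
        exact hσ (h2.trans (mul_inv_cancel σ))
      · intro σ hσ
        simp only [Finset.mem_filter, Finset.mem_univ, true_and] at hσ ⊢
        show ¬ σ⁻¹ * σ⁻¹ = 1
        intro h
        exact hσ (by simpa using congrArg (·⁻¹) h)
      · intro σ _
        show (σ⁻¹)⁻¹ = σ
        simp
    rw [hzero, add_zero]
  -- restrict to "matching" permutations
  set A : Finset (Equiv.Perm (Fin m)) :=
    Finset.univ.filter (fun σ : Equiv.Perm (Fin m) => σ * σ = 1 ∧ ∀ i, G.Adj i (σ i)) with hA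
  have h3 : ∑ σ ∈ Finset.univ.filter (fun σ : Equiv.Perm (Fin m) => σ * σ = 1), f σ
      = ∑ σ ∈ A, f σ := by
    symm
    refine Finset.sum_subset ?_ ?_
    · intro σ hσ
      simp only [hA, Finset.mem_filter, Finset.mem_univ, true_and] at hσ ⊢
      exact hσ.1
    · intro σ hσ hσ'
      simp only [hA, Finset.mem_filter, Finset.mem_univ, true_and] at hσ hσ'
      push_neg at hσ'
      obtain ⟨i, hi⟩ := hσ' hσ
      have : B (σ i) i = 0 := by
        rw [hsym, hB]
        simp [hi]
      exact Finset.prod_eq_zero (Finset.mem_univ i) this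
  -- the bijection with perfect matchings
  rw [h1, h2, h3]
  refine Finset.sum_bij (fun σ _ => Finset.image (fun i => s(i, σ i)) Finset.univ) ?_ ?_ ?_ ?_
  · -- maps to perfect matchings
    intro σ hσ
    simp only [hA, Finset.mem_filter, Finset.mem_univ, true_and] at hσ
    obtain ⟨hinv, hadj⟩ := hσ
    have hσσ : ∀ i, σ (σ i) = i := fun i => by
      have := congrArg (· i) hinv; simpa [Equiv.Perm.mul_apply] using this
    have hne : ∀ i, σ i ≠ i := fun i h => G.irrefl (h ▸ hadj i)
    simp only [Finset.mem_filter, Finset.mem_univ, true_and]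
    constructor
    · intro e he
      simp only [Finset.mem_image, Finset.mem_univ, true_and] at he
      obtain ⟨i, rfl⟩ := he
      exact G.mem_edgeSet.mpr (hadj i)
    · intro v
      refine ⟨s(v, σ v), ⟨Finset.mem_image_of_mem _ (Finset.mem_univ v), Sym2.mem_mk_left v _⟩, ?_⟩
      rintro e ⟨he, hv⟩
      simp only [Finset.mem_image, Finset.mem_univ, true_and] at he
      obtain ⟨j, rfl⟩ := he
      rcases Sym2.mem_iff.mp hv with h | h
      · rw [h]
      · subst h
        rw [hσσ j, Sym2.eq_swap]
  · -- injective
    intro σ hσ τ hτ h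
    simp only [hA, Finset.mem_filter, Finset.mem_univ, true_and] at hσ hτ
    have hneσ : ∀ i, σ i ≠ i := fun i hi => G.irrefl (hi ▸ hσ.2 i)
    have h' : Finset.image (fun i => s(i, σ i)) Finset.univ
        = Finset.image (fun i => s(i, τ i)) Finset.univ := h
    refine Equiv.ext fun i => ?_
    have h1 : s(i, σ i) ∈ Finset.image (fun j => s(j, τ j)) Finset.univ := by
      rw [← h']; exact Finset.mem_image_of_mem _ (Finset.mem_univ i)
    simp only [Finset.mem_image, Finset.mem_univ, true_and] at h1
    obtain ⟨j, hj⟩ := h1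
    have hττ : ∀ i, τ (τ i) = i := fun i => by
      have := congrArg (· i) hτ.1; simpa [Equiv.Perm.mul_apply] using this
    rcases Sym2.eq_iff.mp hj with ⟨rfl, h2⟩ | ⟨h2, h3⟩
    · exact h2.symm
    · subst h2
      have := congrArg τ h3
      rw [hττ] at this
      exact this
  · -- surjective
    intro M hM
    simp only [Finset.mem_filter, Finset.mem_univ, true_and] at hM
    obtain ⟨hedge, huniq⟩ := hM
    have hv : ∀ v : Fin m, ∃ e, e ∈ M ∧ v ∈ e := fun v => (huniq v).exists
    set ed : Fin m → Sym2 (Fin m) := fun v => (hv v).choose with hed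
    have hedspec : ∀ v, ed v ∈ M ∧ v ∈ ed v := fun v => (hv v).choose_spec
    have hedu : ∀ v e, e ∈ M → v ∈ e → e = ed v := fun v e he hve =>
      (huniq v).unique ⟨he, hve⟩ ⟨(hedspec v).1, (hedspec v).2⟩
    set σf : Fin m → Fin m := fun v => Sym2.Mem.other (hedspec v).2 with hσf
    have hspec : ∀ v, s(v, σf v) = ed v := fun v => Sym2.other_spec (hedspec v).2
    have hadj : ∀ v, G.Adj v (σf v) := fun v =>
      G.mem_edgeSet.mp (hspec v ▸ hedge _ (hedspec v).1)
    have hne : ∀ v, σf v ≠ v := fun v h => G.irrefl (h ▸ hadj v)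
    have hinv : Function.Involutive σf := by
      intro v
      have h1 : ed (σf v) = ed v := by
        symm
        exact hedu (σf v) (ed v) (hedspec v).1 (hspec v ▸ Sym2.mem_mk_right v (σf v))
      have h2 : s(σf v, σf (σf v)) = s(v, σf v) := by rw [hspec, h1, hspec]
      rcases Sym2.eq_iff.mp h2 with ⟨h3, h4⟩ | ⟨h3, h4⟩
      · exact absurd h3 (hne v)
      · exact h4
    refine ⟨hinv.toPerm, ?_, ?_⟩
    · simp only [hA, Finset.mem_filter, Finset.mem_univ, true_and]
      constructor
      · ext v
        simp [Equiv.Perm.mul_apply, Function.Involutive.coe_toPerm, hinv v]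
      · intro i
        simpa [Function.Involutive.coe_toPerm] using hadj i
    · ext e
      simp only [Finset.mem_image, Finset.mem_univ, true_and,
        Function.Involutive.coe_toPerm]
      constructor
      · rintro ⟨i, rfl⟩
        exact hspec i ▸ (hedspec i).1
      · intro he
        induction e using Sym2.ind with
        | _ a b =>
          refine ⟨a, ?_⟩
          rw [hspec a, ← hedu a s(a, b) he (Sym2.mem_mk_left a b)]
  · -- values agree
    intro σ hσ
    simp only [hA, Finset.mem_filter, Finset.mem_univ, true_and] at hσ
    obtain ⟨hinv, hadj⟩ := hσ
    have hσσ : ∀ i, σ (σ i) = i := fun i => by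
      have := congrArg (· i) hinv; simpa [Equiv.Perm.mul_apply] using this
    have hne : ∀ i, σ i ≠ i := fun i h => G.irrefl (h ▸ hadj i)
    have hstep : f σ = ∏ i, (X : Polynomial (ZMod 2)) ^ (w s(i, σ i)) := by
      refine Finset.prod_congr rfl fun i _ => ?_
      rw [hsym, hB]
      simp [hadj i]
    rw [hstep, Finset.prod_pow_eq_pow_sum]
    congr 1
    rw [Finset.sum_comp w (fun i => s(i, σ i)), Finset.mul_sum]
    refine Finset.sum_congr rfl fun e he => ?_
    simp only [Finset.mem_image, Finset.mem_univ, true_and] at he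
    obtain ⟨a, rfl⟩ := he
    have hfib : Finset.univ.filter (fun i => s(i, σ i) = s(a, σ a)) = {a, σ a} := by
      ext i
      simp only [Finset.mem_filter, Finset.mem_univ, true_and, Finset.mem_insert,
        Finset.mem_singleton]
      constructor
      · intro h
        rcases Sym2.eq_iff.mp h with ⟨h1, _⟩ | ⟨h1, _⟩
        · exact Or.inl h1
        · exact Or.inr h1
      · rintro (rfl | rfl)
        · rfl
        · rw [hσσ, Sym2.eq_swap]
    rw [hfib, Finset.card_insert_of_notMem (by simpa using (hne a).symm),
      Finset.card_singleton, smul_eq_mul]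
end
end

section
/- Suppose a finite weighted graph G has a unique minimum-weight perfect matching of weight w*. Then the determinant of the associated 𝔽₂[X]-matrix B (with B_{i,j} = X^{w({i,j})} on edges, 0 otherwise) is nonzero, and the minimal degree of a monomial appearing in det(B) equals 2w*. -/
open Polynomial Finset
open scoped Classical

noncomputable section

namespace Stmt4Aux

variable {m : ℕ} (G : SimpleGraph (Fin m)) (w : Sym2 (Fin m) → ℕ)

def B : Matrix (Fin m) (Fin m) (Polynomial (ZMod 2)) :=
  Matrix.of fun i j => if G.Adj i j then (X : Polynomial (ZMod 2)) ^ (w s(i, j)) else 0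

lemma B_symm (i j : Fin m) : B G w i j = B G w j i := by
  simp only [B, Matrix.of_apply]
  rw [G.adj_comm, Sym2.eq_swap]

def T (σ : Equiv.Perm (Fin m)) : Polynomial (ZMod 2) := ∏ i, B G w (σ i) i

lemma det_eq : (B G w).det = ∑ σ : Equiv.Perm (Fin m), T G w σ := by
  rw [Matrix.det_apply]
  refine Finset.sum_congr rfl fun σ _ => ?_
  rcases Int.units_eq_one_or (Equiv.Perm.sign σ) with h | h <;>
    simp [T, h, Units.smul_def, CharTwo.neg_eq]

lemma T_inv (σ : Equiv.Perm (Fin m)) : T G w σ⁻¹ = T G w σ := by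
  unfold T
  rw [← Equiv.prod_comp σ fun i => B G w (σ⁻¹ i) i]
  refine Finset.prod_congr rfl fun i _ => ?_
  rw [show σ⁻¹ (σ i) = i from σ.symm_apply_apply i, B_symm]

lemma det_eq_invol :
    (B G w).det = ∑ σ ∈ univ.filter (fun σ : Equiv.Perm (Fin m) => σ⁻¹ = σ), T G w σ := by
  rw [det_eq, ← Finset.sum_filter_add_sum_filter_not univ
    (fun σ : Equiv.Perm (Fin m) => σ⁻¹ = σ) (T G w)]
  have h0 : ∑ σ ∈ univ.filter (fun σ : Equiv.Perm (Fin m) => ¬σ⁻¹ = σ), T G w σ = 0 := by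
    refine Finset.sum_involution (fun σ _ => σ⁻¹) (fun σ _ => ?_) (fun σ hσ _ => ?_)
      (fun σ hσ => ?_) (fun σ _ => ?_)
    · rw [T_inv, CharTwo.add_self_eq_zero]
    · exact (Finset.mem_filter.mp hσ).2
    · simp only [Finset.mem_filter, Finset.mem_univ, true_and, inv_inv] at hσ ⊢
      exact fun h => hσ h.symm
    · simp
  rw [h0, add_zero]

lemma T_eq (σ : Equiv.Perm (Fin m)) :
    T G w σ = if ∀ i, G.Adj (σ i) i then X ^ (∑ i, w s(i, σ i)) else 0 := by
  split_ifs with h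
  · rw [T, ← Finset.prod_pow_eq_pow_sum]
    refine Finset.prod_congr rfl fun i _ => ?_
    simp only [B, Matrix.of_apply, if_pos (h i), Sym2.eq_swap]
  · obtain ⟨i, hi⟩ := not_forall.mp h
    exact Finset.prod_eq_zero (mem_univ i) (by simp [B, hi])

def Mof (σ : Equiv.Perm (Fin m)) : Finset (Sym2 (Fin m)) :=
  univ.image fun i => s(i, σ i)

lemma Mof_isPM (σ : Equiv.Perm (Fin m)) (hinv : ∀ i, σ (σ i) = i)
    (hgood : ∀ i, G.Adj (σ i) i) : IsPM G (Mof σ) := by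
  constructor
  · intro e he
    obtain ⟨i, -, rfl⟩ := Finset.mem_image.mp he
    exact (hgood i).symm
  · intro v
    refine ⟨s(v, σ v), ⟨Finset.mem_image_of_mem _ (mem_univ v), by simp⟩, ?_⟩
    rintro e ⟨he, hv⟩
    obtain ⟨i, -, rfl⟩ := Finset.mem_image.mp he
    rcases Sym2.mem_iff.mp hv with rfl | h
    · rfl
    · have hi : i = σ v := by rw [h, hinv]
      subst hi
      rw [hinv]; exact Sym2.eq_swap

lemma fiber_eq (σ : Equiv.Perm (Fin m)) (hinv : ∀ i, σ (σ i) = i) (a : Fin m) :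
    (univ.filter fun i => s(i, σ i) = s(a, σ a)) = {a, σ a} := by
  ext i
  simp only [Finset.mem_filter, Finset.mem_univ, true_and, Finset.mem_insert,
    Finset.mem_singleton, Sym2.eq_iff]
  constructor
  · rintro (⟨rfl, -⟩ | ⟨rfl, -⟩)
    · exact Or.inl rfl
    · exact Or.inr rfl
  · rintro (rfl | rfl)
    · exact Or.inl ⟨rfl, rfl⟩
    · exact Or.inr ⟨rfl, hinv a⟩

lemma sum_w (σ : Equiv.Perm (Fin m)) (hinv : ∀ i, σ (σ i) = i) (hne : ∀ i, σ i ≠ i) :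
    ∑ i, w s(i, σ i) = 2 * ∑ e ∈ Mof σ, w e := by
  rw [show (∑ i, w s(i, σ i)) = ∑ i, w ((fun i => s(i, σ i)) i) from rfl,
    Finset.sum_comp w (fun i => s(i, σ i)), Finset.mul_sum]
  refine Finset.sum_congr rfl fun e he => ?_
  obtain ⟨a, -, rfl⟩ := Finset.mem_image.mp he
  rw [fiber_eq σ hinv a, Finset.card_insert_of_notMem (by simpa using (hne a).symm),
    Finset.card_singleton, smul_eq_mul]

end Stmt4Aux

/-- If `G` has a unique minimum-weight perfect matching `M*` of weight `w*`, then the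
determinant of the associated `𝔽₂[X]`-matrix `B` is nonzero and the minimal degree of a
monomial appearing in `det B` equals `2·w*`. -/
theorem stmt4 (m : ℕ) (G : SimpleGraph (Fin m)) (w : Sym2 (Fin m) → ℕ)
    (Mstar : Finset (Sym2 (Fin m))) (wstar : ℕ)
    (hMstar : IsPM G Mstar) (hwstar : wstar = ∑ e ∈ Mstar, w e)
    (hmin : ∀ M, IsPM G M → wstar ≤ ∑ e ∈ M, w e)
    (huniq : ∀ M, IsPM G M → (∑ e ∈ M, w e) = wstar → M = Mstar) :
    (Matrix.of fun i j =>
        if G.Adj i j then (X : Polynomial (ZMod 2)) ^ (w s(i, j)) else 0).det ≠ 0 ∧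
    (Matrix.of fun i j =>
        if G.Adj i j then (X : Polynomial (ZMod 2)) ^ (w s(i, j)) else 0).det.natTrailingDegree
      = 2 * wstar := by
  classical
  show (Stmt4Aux.B G w).det ≠ 0 ∧ (Stmt4Aux.B G w).det.natTrailingDegree = 2 * wstar
  -- construct the canonical involution from Mstar
  have hex : ∀ v : Fin m, ∃ u : Fin m, s(v, u) ∈ Mstar ∧ ∀ e ∈ Mstar, v ∈ e → e = s(v, u) := by
    intro v
    obtain ⟨e, ⟨heM, hve⟩, hu⟩ := hMstar.2 v
    refine ⟨Sym2.Mem.other hve, ?_, ?_⟩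
    · rwa [Sym2.other_spec hve]
    · intro e' he' hv'
      exact (hu e' ⟨he', hv'⟩).trans (Sym2.other_spec hve).symm
  set f : Fin m → Fin m := fun v => (hex v).choose with hfdef
  have hf1 : ∀ v, s(v, f v) ∈ Mstar := fun v => (hex v).choose_spec.1
  have hf2 : ∀ v, ∀ e ∈ Mstar, v ∈ e → e = s(v, f v) := fun v => (hex v).choose_spec.2
  have hAdj : ∀ v, G.Adj v (f v) := fun v => (SimpleGraph.mem_edgeSet G).mp (hMstar.1 _ (hf1 v))
  have hfne : ∀ v, f v ≠ v := fun v => (hAdj v).ne'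
  have hff : Function.Involutive f := by
    intro v
    have h1 := hf2 (f v) (s(v, f v)) (hf1 v) (by simp)
    rcases Sym2.eq_iff.mp h1 with ⟨h2, h3⟩ | ⟨h2, h3⟩
    · exact absurd h2.symm (hfne v)
    · exact h2.symm
  set σs : Equiv.Perm (Fin m) := hff.toPerm with hσsdef
  have hσs_apply : ∀ v, σs v = f v := fun _ => rfl
  have hσs_invol : ∀ i, σs (σs i) = i := fun i => hff i
  have hσs_inv : σs⁻¹ = σs := inv_eq_of_mul_eq_one_right (by ext v; simp [σs, hff v])
  have hgood_s : ∀ i, G.Adj (σs i) i := fun i => (hAdj i).symm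
  have hne_s : ∀ i, σs i ≠ i := fun i => hfne i
  have hMof : Stmt4Aux.Mof σs = Mstar := by
    apply Finset.Subset.antisymm
    · intro e he
      obtain ⟨i, -, rfl⟩ := Finset.mem_image.mp he
      exact hf1 i
    · intro e he
      induction e with
      | h a b =>
        rw [hf2 a _ he (by simp)]
        exact Finset.mem_image_of_mem _ (mem_univ a)
  have hwM : ∑ e ∈ Stmt4Aux.Mof σs, w e = wstar := by rw [hMof, hwstar]
  set p : Polynomial (ZMod 2) := (Stmt4Aux.B G w).det with hpdef
  have hcoeff_lt : ∀ n < 2 * wstar, p.coeff n = 0 := by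
    intro n hn
    rw [hpdef, Stmt4Aux.det_eq_invol, Polynomial.finset_sum_coeff]
    apply Finset.sum_eq_zero
    intro σ hσ
    rw [Stmt4Aux.T_eq]
    split_ifs with hg
    · have hinve : σ⁻¹ = σ := (Finset.mem_filter.mp hσ).2
      have hinv : ∀ i, σ (σ i) = i := fun i => by
        have h : σ⁻¹ (σ i) = i := σ.symm_apply_apply i; rwa [hinve] at h
      have hne : ∀ i, σ i ≠ i := fun i => (hg i).ne
      have hle := hmin _ (Stmt4Aux.Mof_isPM G σ hinv hg)
      rw [Stmt4Aux.sum_w w σ hinv hne, Polynomial.coeff_X_pow,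
        if_neg (Nat.ne_of_lt (lt_of_lt_of_le hn (Nat.mul_le_mul_left 2 hle)))]
    · simp
  have hcoeff_eq : p.coeff (2 * wstar) = 1 := by
    rw [hpdef, Stmt4Aux.det_eq_invol, Polynomial.finset_sum_coeff]
    rw [Finset.sum_eq_single σs]
    · rw [Stmt4Aux.T_eq, if_pos hgood_s, Stmt4Aux.sum_w w σs hσs_invol hne_s, hwM,
        Polynomial.coeff_X_pow, if_pos rfl]
    · intro σ hσ hne'
      rw [Stmt4Aux.T_eq]
      split_ifs with hg
      · have hinve : σ⁻¹ = σ := (Finset.mem_filter.mp hσ).2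
        have hinv : ∀ i, σ (σ i) = i := fun i => by
          have h : σ⁻¹ (σ i) = i := σ.symm_apply_apply i; rwa [hinve] at h
        have hne : ∀ i, σ i ≠ i := fun i => (hg i).ne
        by_cases hwe : ∑ e ∈ Stmt4Aux.Mof σ, w e = wstar
        · exfalso
          have hM := huniq _ (Stmt4Aux.Mof_isPM G σ hinv hg) hwe
          refine hne' (Equiv.ext fun v => ?_)
          have h1 : s(v, σ v) ∈ Mstar := hM ▸ Finset.mem_image_of_mem _ (mem_univ v)
          have h2 := hf2 v _ h1 (by simp)
          rcases Sym2.eq_iff.mp h2 with ⟨-, h3⟩ | ⟨h3, h4⟩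
          · exact h3.trans (hσs_apply v).symm
          · exact absurd h4 (hne v)
        · rw [Stmt4Aux.sum_w w σ hinv hne, Polynomial.coeff_X_pow,
            if_neg (fun hcon => hwe (Nat.eq_of_mul_eq_mul_left (by norm_num) hcon.symm))]
      · simp
    · intro h
      exact absurd hσs_inv (by simpa using h)
  have hp0 : p ≠ 0 := fun h => by simp [h] at hcoeff_eq
  exact ⟨hp0, le_antisymm
    (Polynomial.natTrailingDegree_le_of_ne_zero (hcoeff_eq ▸ one_ne_zero))
    (Polynomial.le_natTrailingDegree hp0 hcoeff_lt)⟩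
end
end

section
/- (Overflow detection) With notation as before, if 2w* ≥ w_th, then the image of det(B) in the truncated ring 𝔽₂[X]/(X^{w_th}) is zero; conversely, if 2w* < w_th and the minimum-weight perfect matching is unique, the image of det(B) in 𝔽₂[X]/(X^{w_th}) is nonzero with minimal-degree term X^{2w*}. -/
open Polynomial Finset
open scoped Classical

noncomputable section

/-- The truncated polynomial ring `𝔽₂[X]/(X^{w_th})`. -/
abbrev Rq (n : ℕ) : Type :=
  Polynomial (ZMod 2) ⧸ Ideal.span {(X : Polynomial (ZMod 2)) ^ n}

/-- The canonical representative of degree `< n` of an element of `𝔽₂[X]/(Xⁿ)`. -/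
noncomputable def rep (n : ℕ) (a : Rq n) : Polynomial (ZMod 2) :=
  (Ideal.Quotient.mk_surjective a).choose %ₘ ((X : Polynomial (ZMod 2)) ^ n)

section Aux

variable {m : ℕ} (G : SimpleGraph (Fin m)) (w : Sym2 (Fin m) → ℕ)

def Bmat : Matrix (Fin m) (Fin m) (Polynomial (ZMod 2)) :=
  Matrix.of fun i j => if G.Adj i j then (X : Polynomial (ZMod 2)) ^ (w s(i, j)) else 0

def Sinv : Finset (Equiv.Perm (Fin m)) :=
  univ.filter (fun σ => (∀ i, G.Adj (σ i) i) ∧ σ⁻¹ = σ)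

def Mof (σ : Equiv.Perm (Fin m)) : Finset (Sym2 (Fin m)) :=
  univ.image (fun i => s(i, σ i))

lemma detB : (Bmat G w).det = ∑ σ ∈ Sinv G, (X : Polynomial (ZMod 2)) ^ (∑ i, w s(σ i, i)) := by
  have h1 : (Bmat G w).det = ∑ σ : Equiv.Perm (Fin m),
      ∏ i, Bmat G w (σ i) i := by
    rw [Matrix.det_apply]
    refine Finset.sum_congr rfl fun σ _ => ?_
    rcases Int.units_eq_one_or (Equiv.Perm.sign σ) with h | h <;> rw [h]
    · simp
    · simp [Units.smul_def, CharTwo.neg_eq]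
  have h2 : ∀ σ : Equiv.Perm (Fin m), ∏ i, Bmat G w (σ i) i =
      if ∀ i, G.Adj (σ i) i then (X : Polynomial (ZMod 2)) ^ (∑ i, w s(σ i, i)) else 0 := by
    intro σ
    by_cases h : ∀ i, G.Adj (σ i) i
    · rw [if_pos h, ← Finset.prod_pow_eq_pow_sum]
      exact Finset.prod_congr rfl fun i _ => by simp [Bmat, h i]
    · rw [if_neg h]
      push_neg at h
      obtain ⟨i, hi⟩ := h
      exact Finset.prod_eq_zero (Finset.mem_univ i) (by simp [Bmat, hi])
  rw [h1]
  simp_rw [h2]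
  rw [Finset.sum_ite, Finset.sum_const_zero, add_zero]
  set e : Equiv.Perm (Fin m) → Polynomial (ZMod 2) :=
    fun σ => (X : Polynomial (ZMod 2)) ^ (∑ i, w s(σ i, i)) with he
  have key : ∀ σ : Equiv.Perm (Fin m), e σ⁻¹ = e σ := by
    intro σ
    simp only [he]
    congr 1
    calc ∑ i, w s(σ⁻¹ i, i) = ∑ i, w s(σ⁻¹ (σ i), σ i) := (Equiv.sum_comp σ _).symm
    _ = ∑ i, w s(σ i, i) := by
        refine Finset.sum_congr rfl fun i _ => ?_
        rw [show σ⁻¹ (σ i) = i from σ.symm_apply_apply i, Sym2.eq_swap]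
  have hadj : ∀ σ : Equiv.Perm (Fin m), (∀ i, G.Adj (σ i) i) → ∀ i, G.Adj (σ⁻¹ i) i := by
    intro σ h i
    have := h (σ⁻¹ i)
    rw [show σ (σ⁻¹ i) = i from σ.apply_symm_apply i] at this
    exact this.symm
  have hsplit : univ.filter (fun σ : Equiv.Perm (Fin m) => ∀ i, G.Adj (σ i) i) =
      Sinv G ∪ (univ.filter (fun σ => (∀ i, G.Adj (σ i) i) ∧ σ⁻¹ ≠ σ)) := by
    ext σ
    simp only [Sinv, Finset.mem_filter, Finset.mem_union, Finset.mem_univ, true_and]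
    tauto
  rw [hsplit, Finset.sum_union]
  · have : ∑ σ ∈ univ.filter (fun σ : Equiv.Perm (Fin m) => (∀ i, G.Adj (σ i) i) ∧ σ⁻¹ ≠ σ), e σ = 0 := by
      refine Finset.sum_involution (fun σ _ => σ⁻¹) ?_ ?_ ?_ ?_
      · intro σ _; rw [key]; exact CharTwo.add_self_eq_zero _
      · intro σ hσ _
        simp only [Finset.mem_filter] at hσ
        exact hσ.2.2
      · intro σ hσ
        simp only [Finset.mem_filter, Finset.mem_univ, true_and] at hσ ⊢
        refine ⟨hadj σ hσ.1, ?_⟩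
        rw [inv_inv]
        intro h; exact hσ.2 h.symm
      · intro σ _; exact inv_inv σ
    rw [this, add_zero]
  · rw [Finset.disjoint_left]
    intro σ h1 h2
    simp only [Sinv, Finset.mem_filter] at h1 h2
    exact h2.2.2 h1.2.2

variable {G}

lemma sigma_sigma {σ : Equiv.Perm (Fin m)} (hσ : σ ∈ Sinv G) (i : Fin m) : σ (σ i) = i := by
  simp only [Sinv, Finset.mem_filter] at hσ
  have h : σ⁻¹ (σ i) = i := σ.symm_apply_apply i
  rwa [hσ.2.2] at h

lemma sigma_adj {σ : Equiv.Perm (Fin m)} (hσ : σ ∈ Sinv G) (i : Fin m) : G.Adj (σ i) i := by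
  simp only [Sinv, Finset.mem_filter] at hσ
  exact hσ.2.1 i

lemma Mof_PM {σ : Equiv.Perm (Fin m)} (hσ : σ ∈ Sinv G) : IsPM G (Mof σ) := by
  constructor
  · intro e he
    simp only [Mof, Finset.mem_image, Finset.mem_univ, true_and] at he
    obtain ⟨i, rfl⟩ := he
    exact G.mem_edgeSet.2 (sigma_adj hσ i).symm
  · intro v
    refine ⟨s(v, σ v), ⟨?_, ?_⟩, ?_⟩
    · exact Finset.mem_image.2 ⟨v, Finset.mem_univ v, rfl⟩
    · exact Sym2.mem_mk_left v (σ v)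
    · rintro e ⟨he, hv⟩
      simp only [Mof, Finset.mem_image, Finset.mem_univ, true_and] at he
      obtain ⟨i, rfl⟩ := he
      rcases Sym2.mem_iff.1 hv with h | h
      · subst h; rfl
      · subst h
        rw [sigma_sigma hσ, Sym2.eq_swap]

lemma Mof_fiber {σ : Equiv.Perm (Fin m)} (hσ : σ ∈ Sinv G) (i0 : Fin m) :
    (univ.filter (fun i => s(i, σ i) = s(i0, σ i0))) = {i0, σ i0} := by
  ext i
  simp only [Finset.mem_filter, Finset.mem_univ, true_and, Finset.mem_insert, Finset.mem_singleton]
  constructor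
  · intro h
    rcases Sym2.eq_iff.1 h with ⟨h1, _⟩ | ⟨h1, _⟩
    · exact Or.inl h1
    · exact Or.inr h1
  · rintro (rfl | rfl)
    · rfl
    · rw [sigma_sigma hσ, Sym2.eq_swap]

lemma Mof_weight {σ : Equiv.Perm (Fin m)} (hσ : σ ∈ Sinv G) :
    (∑ i, w s(σ i, i)) = 2 * ∑ e ∈ Mof σ, w e := by
  have h1 : (∑ i, w s(σ i, i)) = ∑ i, w s(i, σ i) := by
    refine Finset.sum_congr rfl fun i _ => ?_
    rw [Sym2.eq_swap]
  rw [h1, Finset.sum_comp w (fun i => s(i, σ i))]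
  rw [Finset.mul_sum]
  refine Finset.sum_congr rfl fun e he => ?_
  simp only [Mof, Finset.mem_image, Finset.mem_univ, true_and] at he
  obtain ⟨i0, rfl⟩ := he
  rw [Mof_fiber hσ i0]
  have hne : i0 ≠ σ i0 := (sigma_adj hσ i0).ne'
  rw [Finset.card_insert_of_notMem (by simpa using hne), Finset.card_singleton]
  simp [two_mul]

lemma Mof_inj {σ τ : Equiv.Perm (Fin m)} (hσ : σ ∈ Sinv G) (hτ : τ ∈ Sinv G)
    (h : Mof σ = Mof τ) : σ = τ := by
  apply Equiv.ext; intro v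
  have h1 : s(v, σ v) ∈ Mof τ := by
    rw [← h]; exact Finset.mem_image.2 ⟨v, Finset.mem_univ v, rfl⟩
  have h2 := (Mof_PM hτ).2 v
  have e1 : s(v, σ v) = s(v, τ v) := by
    refine h2.unique ⟨h1, Sym2.mem_mk_left _ _⟩
      ⟨Finset.mem_image.2 ⟨v, Finset.mem_univ v, rfl⟩, Sym2.mem_mk_left _ _⟩
  rcases Sym2.eq_iff.1 e1 with ⟨_, h3⟩ | ⟨h3, h4⟩
  · exact h3
  · rw [h4, ← h3]

lemma exists_sigma {M : Finset (Sym2 (Fin m))} (hM : IsPM G M) :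
    ∃ σ ∈ Sinv G, Mof σ = M := by
  have hch : ∀ v : Fin m, ∃ e, e ∈ M ∧ v ∈ e := fun v => (hM.2 v).exists
  choose ev hev hvev using hch
  set f : Fin m → Fin m := fun v => Sym2.Mem.other (hvev v) with hf
  have hspec : ∀ v, s(v, f v) = ev v := fun v => Sym2.other_spec (hvev v)
  have hadj : ∀ v, G.Adj v (f v) := by
    intro v
    have := hM.1 (ev v) (hev v)
    rw [← hspec v] at this
    exact G.mem_edgeSet.1 this
  have hne : ∀ v, f v ≠ v := fun v => (hadj v).ne'
  have hmem : ∀ v, f v ∈ ev v := by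
    intro v; rw [← hspec v]; exact Sym2.mem_mk_right _ _
  have heq : ∀ v, ev (f v) = ev v :=
    fun v => (hM.2 (f v)).unique ⟨hev (f v), hvev (f v)⟩ ⟨hev v, hmem v⟩
  have hinv : Function.Involutive f := by
    intro v
    have h1 : s(f v, f (f v)) = s(v, f v) := by rw [hspec (f v), heq v, hspec v]
    rcases Sym2.eq_iff.1 h1 with ⟨h2, _⟩ | ⟨_, h3⟩
    · exact absurd h2 (hne v)
    · exact h3
  refine ⟨hinv.toPerm f, ?_, ?_⟩
  · simp only [Sinv, Finset.mem_filter, Finset.mem_univ, true_and]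
    constructor
    · intro i; exact (hadj i).symm
    · apply inv_eq_of_mul_eq_one_left
      ext i
      simp [hinv i]
  · ext e
    simp only [Mof, Finset.mem_image, Finset.mem_univ, true_and]
    constructor
    · rintro ⟨i, rfl⟩
      show s(i, f i) ∈ M
      rw [hspec i]; exact hev i
    · intro he
      obtain ⟨a, ha⟩ : ∃ a, a ∈ e := ⟨e.out.1, Sym2.out_fst_mem e⟩
      refine ⟨a, ?_⟩
      have : e = ev a := (hM.2 a).unique ⟨he, ha⟩ ⟨hev a, hvev a⟩
      show s(a, f a) = e
      rw [hspec a, this]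

end Aux

/-- Overflow detection: if `2w* ≥ w_th` then the image of `det B` in `𝔽₂[X]/(X^{w_th})`
vanishes; conversely, if `2w* < w_th` and the minimum-weight perfect matching is unique,
the image of `det B` is nonzero with minimal-degree term `X^{2w*}`. -/
theorem stmt5 (m : ℕ) (G : SimpleGraph (Fin m)) (w : Sym2 (Fin m) → ℕ) (wth : ℕ)
    (Mstar : Finset (Sym2 (Fin m))) (wstar : ℕ)
    (hMstar : IsPM G Mstar) (hwstar : wstar = ∑ e ∈ Mstar, w e)
    (hmin : ∀ M, IsPM G M → wstar ≤ ∑ e ∈ M, w e) :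
    (wth ≤ 2 * wstar →
      Ideal.Quotient.mk (Ideal.span {(X : Polynomial (ZMod 2)) ^ wth})
        (Matrix.of fun i j =>
          if G.Adj i j then (X : Polynomial (ZMod 2)) ^ (w s(i, j)) else 0).det = 0) ∧
    (2 * wstar < wth →
      (∀ M, IsPM G M → (∑ e ∈ M, w e) = wstar → M = Mstar) →
      Ideal.Quotient.mk (Ideal.span {(X : Polynomial (ZMod 2)) ^ wth})
        (Matrix.of fun i j =>
          if G.Adj i j then (X : Polynomial (ZMod 2)) ^ (w s(i, j)) else 0).det ≠ 0 ∧
      (rep wth (Ideal.Quotient.mk (Ideal.span {(X : Polynomial (ZMod 2)) ^ wth})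
        (Matrix.of fun i j =>
          if G.Adj i j then (X : Polynomial (ZMod 2)) ^ (w s(i, j)) else 0).det)).natTrailingDegree
        = 2 * wstar) := by
  have hB : (Matrix.of fun i j =>
      if G.Adj i j then (X : Polynomial (ZMod 2)) ^ (w s(i, j)) else 0) = Bmat G w := rfl
  rw [hB]
  set D := (Bmat G w).det with hDdef
  have hD : D = ∑ σ ∈ Sinv G, (X : Polynomial (ZMod 2)) ^ (∑ i, w s(σ i, i)) := detB G w
  have hlow : ∀ σ ∈ Sinv G, 2 * wstar ≤ ∑ i, w s(σ i, i) := by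
    intro σ hσ
    rw [Mof_weight w hσ]
    exact Nat.mul_le_mul_left 2 (hmin _ (Mof_PM hσ))
  have hcoeff_lt : ∀ k < 2 * wstar, D.coeff k = 0 := by
    intro k hk
    rw [hD, Polynomial.finset_sum_coeff]
    refine Finset.sum_eq_zero fun σ hσ => ?_
    rw [Polynomial.coeff_X_pow, if_neg]
    have := hlow σ hσ
    omega
  constructor
  · intro hle
    rw [Ideal.Quotient.eq_zero_iff_mem, Ideal.mem_span_singleton, hD]
    exact Finset.dvd_sum fun σ hσ => pow_dvd_pow X (hle.trans (hlow σ hσ))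
  · intro hlt huniq
    obtain ⟨σs, hσs, hMs⟩ := exists_sigma hMstar
    have hEs : (∑ i, w s(σs i, i)) = 2 * wstar := by
      rw [Mof_weight w hσs, hMs, ← hwstar]
    have hcstar : D.coeff (2 * wstar) = 1 := by
      rw [hD, Polynomial.finset_sum_coeff]
      rw [Finset.sum_eq_single_of_mem σs hσs]
      · rw [Polynomial.coeff_X_pow, if_pos hEs.symm]
      · intro σ hσ hne
        rw [Polynomial.coeff_X_pow, if_neg]
        intro hEq
        have hw2 := Mof_weight w hσ
        have hw3 : ∑ e ∈ Mof σ, w e = wstar := by omega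
        exact hne (Mof_inj hσ hσs (by rw [huniq _ (Mof_PM hσ) hw3, hMs]))
    have hmonic : ((X : Polynomial (ZMod 2)) ^ wth).Monic := monic_X_pow wth
    constructor
    · intro h0
      rw [Ideal.Quotient.eq_zero_iff_mem, Ideal.mem_span_singleton] at h0
      have := (Polynomial.X_pow_dvd_iff.1 h0) (2 * wstar) hlt
      rw [hcstar] at this
      exact one_ne_zero this
    · have hrep : rep wth (Ideal.Quotient.mk (Ideal.span {(X : Polynomial (ZMod 2)) ^ wth}) D)
          = D %ₘ (X : Polynomial (ZMod 2)) ^ wth := by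
        unfold rep
        set a := Ideal.Quotient.mk (Ideal.span {(X : Polynomial (ZMod 2)) ^ wth}) D with ha
        have hq2 : Ideal.Quotient.mk (Ideal.span {(X : Polynomial (ZMod 2)) ^ wth})
            (Ideal.Quotient.mk_surjective a).choose = a :=
          (Ideal.Quotient.mk_surjective a).choose_spec
        have hdvd : (X : Polynomial (ZMod 2)) ^ wth ∣ (Ideal.Quotient.mk_surjective a).choose - D := by
          rw [← Ideal.mem_span_singleton, ← Ideal.Quotient.eq_zero_iff_mem, map_sub, hq2, ha,
            sub_self]
        have h0 : ((Ideal.Quotient.mk_surjective a).choose - D) %ₘ (X : Polynomial (ZMod 2)) ^ wth = 0 :=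
          (Polynomial.modByMonic_eq_zero_iff_dvd hmonic).2 hdvd
        rw [Polynomial.sub_modByMonic] at h0
        exact sub_eq_zero.1 h0
      have hrc : ∀ k < wth, (D %ₘ (X : Polynomial (ZMod 2)) ^ wth).coeff k = D.coeff k := by
        intro k hk
        conv_rhs => rw [← Polynomial.modByMonic_add_div D ((X : Polynomial (ZMod 2)) ^ wth)]
        rw [Polynomial.coeff_add]
        have : ((X : Polynomial (ZMod 2)) ^ wth * (D /ₘ (X : Polynomial (ZMod 2)) ^ wth)).coeff k = 0 :=
          (Polynomial.X_pow_dvd_iff.1 (dvd_mul_right _ _)) k hk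
        rw [this, add_zero]
      rw [hrep]
      have h1 : (D %ₘ (X : Polynomial (ZMod 2)) ^ wth).coeff (2 * wstar) = 1 := by
        rw [hrc _ hlt, hcstar]
      apply le_antisymm
      · exact Polynomial.natTrailingDegree_le_of_ne_zero (by rw [h1]; exact one_ne_zero)
      · refine Polynomial.le_natTrailingDegree ?_ ?_
        · intro h0
          rw [h0] at h1
          simp at h1
        · intro k hk
          rw [hrc k (hk.trans hlt), hcoeff_lt k hk]
end
end

section
/- Under the amplified perturbation w̃(e) = C̃·w(e) + W(e) with C̃ = (m/2)(W_max − 1) + 1 and 1 ≤ W(e) ≤ W_max, for any perfect matching M' that is not minimum under w and any minimum perfect matching M* under w, the w̃-weight gap satisfies Σ_{e∈M'} w̃(e) − Σ_{e∈M*} w̃(e) ≥ 1. -/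
open Finset

lemma pm_card {m : ℕ} (G : SimpleGraph (Fin m)) (M : Finset (Sym2 (Fin m)))
    (h : IsPM G M) : M.card = m / 2 := by
  obtain ⟨hE, hU⟩ := h
  choose f hf huniq using hU
  have hmem : ∀ v, f v ∈ M := fun v => (hf v).1
  have key : ∀ e ∈ M, (univ.filter (fun v => f v = e)).card = 2 := by
    intro e he
    have hfib : (univ.filter (fun v => f v = e)) = univ.filter (fun v => v ∈ e) := by
      ext v
      simp only [mem_filter, mem_univ, true_and]
      constructor
      · rintro rfl; exact (hf v).2
      · intro hv; exact (huniq v e ⟨he, hv⟩).symm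
    rw [hfib]
    have hd : ¬ e.IsDiag := (G.not_isDiag_of_mem_edgeSet (hE e he))
    induction e using Sym2.ind with
    | _ a b =>
      have hab : a ≠ b := by simpa [Sym2.isDiag_iff_proj_eq] using hd
      have : univ.filter (fun v => v ∈ s(a, b)) = {a, b} := by
        ext v; simp [Sym2.mem_iff]
      rw [this, card_insert_of_notMem (by simp [hab]), card_singleton]
  have hsum : ∑ e ∈ M, (univ.filter (fun v => f v = e)).card = (univ : Finset (Fin m)).card :=
    (Finset.card_eq_sum_card_fiberwise (fun v _ => hmem v)).symm
  rw [Finset.sum_congr rfl key] at hsum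
  simp only [Finset.sum_const, smul_eq_mul, Finset.card_univ, Fintype.card_fin] at hsum
  omega

/-- Under the amplified perturbation `w̃(e) = C̃·w(e) + W(e)` with
`C̃ = (m/2)(W_max − 1) + 1` and `1 ≤ W(e) ≤ W_max`, any non-minimum perfect matching `M'`
has `w̃`-weight at least `1` more than any minimum perfect matching `M*`. -/
theorem stmt7 (m : ℕ) (hm : Even m) (G : SimpleGraph (Fin m))
    (w : Sym2 (Fin m) → ℤ) (W : Sym2 (Fin m) → ℕ) (Wmax : ℕ)
    (hW : ∀ e ∈ G.edgeSet, 1 ≤ W e ∧ W e ≤ Wmax)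
    (Ctilde : ℤ) (hC : Ctilde = (m / 2 : ℕ) * ((Wmax : ℤ) - 1) + 1)
    (Mstar M' : Finset (Sym2 (Fin m))) (hMstar : IsPM G Mstar) (hM' : IsPM G M')
    (hmin : ∀ M, IsPM G M → (∑ e ∈ Mstar, w e) ≤ ∑ e ∈ M, w e)
    (hgt : (∑ e ∈ Mstar, w e) < ∑ e ∈ M', w e) :
    1 ≤ (∑ e ∈ M', (Ctilde * w e + (W e : ℤ)))
        - ∑ e ∈ Mstar, (Ctilde * w e + (W e : ℤ)) := by
  set k := m / 2 with hk
  have hcs : Mstar.card = k := pm_card G Mstar hMstar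
  have hc' : M'.card = k := pm_card G M' hM'
  -- m > 0 since the two matchings differ
  have hk0 : 0 < k := by
    by_contra h
    have : Mstar = ∅ := Finset.card_eq_zero.mp (by omega)
    have h2 : M' = ∅ := Finset.card_eq_zero.mp (by omega)
    rw [this, h2] at hgt; simp at hgt
  -- Wmax ≥ 1
  have hMne : Mstar.Nonempty := Finset.card_pos.mp (by omega)
  obtain ⟨e0, he0⟩ := hMne
  have hWmax : 1 ≤ Wmax := le_trans (hW e0 (hMstar.1 e0 he0)).1 (hW e0 (hMstar.1 e0 he0)).2
  have hΔ : 1 ≤ (∑ e ∈ M', w e) - ∑ e ∈ Mstar, w e := by omega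
  have hlow : (k : ℤ) ≤ ∑ e ∈ M', (W e : ℤ) := by
    calc (k : ℤ) = ∑ _e ∈ M', (1 : ℤ) := by simp [hc']
    _ ≤ ∑ e ∈ M', (W e : ℤ) := Finset.sum_le_sum (fun e he => by
        exact_mod_cast (hW e (hM'.1 e he)).1)
  have hhigh : ∑ e ∈ Mstar, (W e : ℤ) ≤ (k : ℤ) * Wmax := by
    calc ∑ e ∈ Mstar, (W e : ℤ) ≤ ∑ _e ∈ Mstar, (Wmax : ℤ) :=
        Finset.sum_le_sum (fun e he => by exact_mod_cast (hW e (hMstar.1 e he)).2)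
    _ = (k : ℤ) * Wmax := by simp [hcs, mul_comm]
  have hC1 : (1 : ℤ) ≤ Ctilde := by
    rw [hC]
    have : (0:ℤ) ≤ (k : ℤ) * ((Wmax : ℤ) - 1) := by
      apply mul_nonneg (by positivity)
      have : (1:ℤ) ≤ (Wmax : ℤ) := by exact_mod_cast hWmax
      linarith
    linarith
  have hsplit : ∀ (M : Finset (Sym2 (Fin m))),
      ∑ e ∈ M, (Ctilde * w e + (W e : ℤ)) = Ctilde * (∑ e ∈ M, w e) + ∑ e ∈ M, (W e : ℤ) := by
    intro M; rw [Finset.sum_add_distrib, Finset.mul_sum]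
  rw [hsplit, hsplit]
  have hmul : Ctilde ≤ Ctilde * ((∑ e ∈ M', w e) - ∑ e ∈ Mstar, w e) := by
    nlinarith
  rw [hC] at hmul ⊢
  nlinarith
end

section
/- (Isolation lemma) Let F be a nonempty family of subsets of a finite set E with |E| = N, and assign to each element e ∈ E an independent uniformly random weight W(e) ∈ {1,…,W_max}. Then the probability that the minimum total weight over F is attained by more than one member of F is at most N / W_max. -/
open Finset
open scoped Classical

/-- The total weight of `S ⊆ E` under the random weight assignment `W : E → Fin Wmax`,
where the weight of `e` is `(W e : ℕ) + 1 ∈ {1, …, Wmax}`. -/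
def totalWt {E : Type*} {Wmax : ℕ} (W : E → Fin Wmax) (S : Finset E) : ℕ :=
  ∑ e ∈ S, ((W e : ℕ) + 1)

/-- Isolation lemma: for a nonempty family `F` of subsets of a finite set `E` of size `N`,
with independent uniform weights in `{1, …, Wmax}`, the probability that the minimum total
weight is attained by more than one member of `F` is at most `N / Wmax`. -/
theorem stmt8 {E : Type*} [Fintype E] [DecidableEq E] (N Wmax : ℕ)
    (hN : Fintype.card E = N) (hWmax : 0 < Wmax)
    (F : Finset (Finset E)) (hF : F.Nonempty) :
    ((Finset.univ.filter (fun W : E → Fin Wmax =>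
        ∃ S ∈ F, ∃ T ∈ F, S ≠ T ∧
          (∀ U ∈ F, totalWt W S ≤ totalWt W U) ∧
          (∀ U ∈ F, totalWt W T ≤ totalWt W U))).card : ℝ)
      / (Fintype.card (E → Fin Wmax) : ℝ) ≤ (N : ℝ) / (Wmax : ℝ) := by
  classical
  -- `amb e W` : `e` lies in some minimum-weight set and misses another minimum-weight set
  set amb : E → (E → Fin Wmax) → Prop := fun e W =>
    ∃ S ∈ F, e ∈ S ∧ (∀ U ∈ F, totalWt W S ≤ totalWt W U) ∧
    ∃ T ∈ F, e ∉ T ∧ (∀ U ∈ F, totalWt W T ≤ totalWt W U) with hambdef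
  -- Key: if two weight functions agree off `e` and `e` is ambiguous for both,
  -- they agree at `e` as well.
  have key : ∀ (e : E) (W W' : E → Fin Wmax), (∀ x, x ≠ e → W x = W' x) →
      amb e W → amb e W' → W e = W' e := by
    intro e W W' hoff h1 h2
    obtain ⟨S, hSF, heS, hSmin, T, hTF, heT, hTmin⟩ := h1
    obtain ⟨S', hS'F, heS', hS'min, T', hT'F, heT', hT'min⟩ := h2
    have hnot : ∀ U : Finset E, e ∉ U → totalWt W U = totalWt W' U := by
      intro U heU
      refine Finset.sum_congr rfl fun x hx => ?_
      rw [hoff x (fun h => heU (h ▸ hx))]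
    have hsplit : ∀ (V : E → Fin Wmax) (U : Finset E), e ∈ U →
        totalWt V U = ((V e : ℕ) + 1) + ∑ x ∈ U.erase e, ((V x : ℕ) + 1) := by
      intro V U h
      exact (Finset.add_sum_erase U _ h).symm
    have hsum : ∀ U : Finset E, ∑ x ∈ U.erase e, ((W x : ℕ) + 1)
        = ∑ x ∈ U.erase e, ((W' x : ℕ) + 1) := by
      intro U
      refine Finset.sum_congr rfl fun x hx => ?_
      rw [hoff x (Finset.ne_of_mem_erase hx)]
    set A := ∑ x ∈ S.erase e, ((W x : ℕ) + 1) with hA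
    set A' := ∑ x ∈ S'.erase e, ((W x : ℕ) + 1) with hA'
    have eS : totalWt W S = ((W e : ℕ) + 1) + A := hsplit W S heS
    have eS' : totalWt W S' = ((W e : ℕ) + 1) + A' := hsplit W S' heS'
    have eS2 : totalWt W' S = ((W' e : ℕ) + 1) + A := by
      rw [hsplit W' S heS, hA, hsum S]
    have eS2' : totalWt W' S' = ((W' e : ℕ) + 1) + A' := by
      rw [hsplit W' S' heS', hA', hsum S']
    have hT'S' : totalWt W' T' = totalWt W' S' :=
      le_antisymm (hT'min S' hS'F) (hS'min T' hT'F)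
    have hTS : totalWt W T = totalWt W S :=
      le_antisymm (hTmin S hSF) (hSmin T hTF)
    have h1a : totalWt W S ≤ totalWt W' S' := by
      rw [← hT'S', ← hnot T' heT']; exact hSmin T' hT'F
    have h1b : totalWt W' S' ≤ totalWt W S := by
      rw [← hTS, hnot T heT]; exact hS'min T hTF
    have heq : ((W e : ℕ) + 1) + A = ((W' e : ℕ) + 1) + A' := by
      rw [← eS, ← eS2']; exact le_antisymm h1a h1b
    have h2a : ((W e : ℕ) + 1) + A ≤ ((W e : ℕ) + 1) + A' := by
      rw [← eS, ← eS']; exact hSmin S' hS'F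
    have h2b : ((W' e : ℕ) + 1) + A' ≤ ((W' e : ℕ) + 1) + A := by
      rw [← eS2, ← eS2']; exact hS'min S hSF
    have : (W e : ℕ) = (W' e : ℕ) := by omega
    exact Fin.val_injective this
  -- The bad set is covered by the union over `e` of the ambiguity events.
  have hsub : (Finset.univ.filter (fun W : E → Fin Wmax =>
        ∃ S ∈ F, ∃ T ∈ F, S ≠ T ∧
          (∀ U ∈ F, totalWt W S ≤ totalWt W U) ∧
          (∀ U ∈ F, totalWt W T ≤ totalWt W U)))
      ⊆ Finset.univ.biUnion (fun e : E => Finset.univ.filter (fun W => amb e W)) := by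
    intro W hW
    simp only [Finset.mem_filter, Finset.mem_univ, true_and] at hW
    obtain ⟨S, hSF, T, hTF, hST, hSmin, hTmin⟩ := hW
    simp only [Finset.mem_biUnion, Finset.mem_filter, Finset.mem_univ, true_and]
    by_cases hsub' : S ⊆ T
    · have hss : S ⊂ T := lt_of_le_of_ne hsub' hST
      obtain ⟨e, heT, heS⟩ := Finset.exists_of_ssubset hss
      exact ⟨e, T, hTF, heT, hTmin, S, hSF, heS, hSmin⟩
    · obtain ⟨e, heS, heT⟩ := Finset.not_subset.mp hsub'
      exact ⟨e, S, hSF, heS, hSmin, T, hTF, heT, hTmin⟩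
  -- Each ambiguity event has density at most `1 / Wmax`.
  have hAe : ∀ e : E, (Finset.univ.filter (fun W : E → Fin Wmax => amb e W)).card * Wmax
      ≤ Fintype.card (E → Fin Wmax) := by
    intro e
    have hinj : ((Finset.univ.filter (fun W : E → Fin Wmax => amb e W)) ×ˢ
        (Finset.univ : Finset (Fin Wmax))).card
        ≤ (Finset.univ : Finset (E → Fin Wmax)).card := by
      apply Finset.card_le_card_of_injOn (fun p => Function.update p.1 e p.2)
      · intro p _; exact Finset.mem_univ _
      · rintro ⟨W, v⟩ hWv ⟨W', v'⟩ hW'v' heq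
        simp only [Finset.mem_coe, Finset.mem_product, Finset.mem_filter,
          Finset.mem_univ, true_and] at hWv hW'v'
        have hv : v = v' := by
          have := congrFun heq e
          simpa using this
        have hoff : ∀ x, x ≠ e → W x = W' x := by
          intro x hx
          have := congrFun heq x
          simpa [Function.update_of_ne hx] using this
        have he : W e = W' e := key e W W' hoff hWv.1 hW'v'.1
        have : W = W' := funext fun x => by
          by_cases hx : x = e
          · rw [hx]; exact he
          · exact hoff x hx
        exact Prod.ext this hv
    simpa [Finset.card_product, Finset.card_univ] using hinj
  -- Put the counting together.
  have hcount : (Finset.univ.filter (fun W : E → Fin Wmax =>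
        ∃ S ∈ F, ∃ T ∈ F, S ≠ T ∧
          (∀ U ∈ F, totalWt W S ≤ totalWt W U) ∧
          (∀ U ∈ F, totalWt W T ≤ totalWt W U))).card * Wmax
      ≤ N * Fintype.card (E → Fin Wmax) := by
    calc (Finset.univ.filter (fun W : E → Fin Wmax =>
        ∃ S ∈ F, ∃ T ∈ F, S ≠ T ∧
          (∀ U ∈ F, totalWt W S ≤ totalWt W U) ∧
          (∀ U ∈ F, totalWt W T ≤ totalWt W U))).card * Wmax
        ≤ (Finset.univ.biUnion (fun e : E =>
            Finset.univ.filter (fun W => amb e W))).card * Wmax := by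
          exact Nat.mul_le_mul_right _ (Finset.card_le_card hsub)
      _ ≤ (∑ e : E, (Finset.univ.filter (fun W : E → Fin Wmax => amb e W)).card) * Wmax := by
          exact Nat.mul_le_mul_right _ (Finset.card_biUnion_le)
      _ = ∑ e : E, (Finset.univ.filter (fun W : E → Fin Wmax => amb e W)).card * Wmax := by
          rw [Finset.sum_mul]
      _ ≤ ∑ _e : E, Fintype.card (E → Fin Wmax) := Finset.sum_le_sum fun e _ => hAe e
      _ = N * Fintype.card (E → Fin Wmax) := by
          rw [Finset.sum_const, Finset.card_univ, hN, smul_eq_mul]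
  have hcardpos : 0 < Fintype.card (E → Fin Wmax) := by
    rw [Fintype.card_fun, Fintype.card_fin]
    exact Nat.pow_pos hWmax
  rw [div_le_div_iff₀ (by exact_mod_cast hcardpos) (by exact_mod_cast hWmax)]
  exact_mod_cast hcount
end

section
/- For a symmetric zero-diagonal matrix over a commutative ring of characteristic 2, the contribution to the determinant of the set of permutations containing at least one cycle of length greater than 2 vanishes: the involution that reverses a distinguished longest cycle pairs each such permutation with a distinct permutation yielding the same product of matrix entries, and paired contributions cancel since 1 + 1 = 0. -/
open Finset

/-- For a symmetric zero-diagonal matrix over a commutative ring of characteristic 2, the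
total contribution to the determinant of the permutations containing at least one cycle of
length `> 2` (i.e. those with `σ² ≠ 1`) vanishes: reversing a distinguished longest cycle
pairs such permutations into couples with equal entry products, which cancel since `1+1=0`. -/
theorem stmt10 {R : Type*} [CommRing R] (hchar : (2 : R) = 0) (m : ℕ)
    (B : Matrix (Fin m) (Fin m) R) (hsym : B.IsSymm) (hdiag : ∀ i, B i i = 0) :
    ∑ σ ∈ Finset.univ.filter (fun σ : Equiv.Perm (Fin m) => σ * σ ≠ 1),
      ∏ i, B i (σ i) = 0 := by
  have key : ∀ σ : Equiv.Perm (Fin m),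
      (∏ i, B i (σ⁻¹ i)) = ∏ i, B i (σ i) := by
    intro σ
    rw [← Equiv.prod_comp σ (fun i => B i (σ⁻¹ i))]
    refine Finset.prod_congr rfl fun i _ => ?_
    simp [← hsym.apply i (σ i)]
  refine Finset.sum_involution (fun σ _ => σ⁻¹) ?_ ?_ ?_ ?_
  · intro σ hσ
    rw [key σ, ← two_mul, hchar, zero_mul]
  · intro σ hσ _
    simp only [mem_filter, mem_univ, true_and] at hσ
    intro h
    apply hσ
    nth_rewrite 2 [← h]
    group
  · intro σ hσ
    simp only [mem_filter, mem_univ, true_and] at hσ ⊢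
    intro h
    apply hσ
    have := congrArg (·⁻¹) h
    simpa using this
  · intro σ _
    simp
end
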